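/- Let Z be a nonnegative supermartingale with Z_0 = 1 (in continuous time, right-continuous paths). Then limsup_{t→∞} (1/t) ln Z_t ≤ 0 almost surely. -/

import Mathlib

open MeasureTheory Filter

/-- Maximal inequality for nonnegative discrete-time supermartingales. -/
lemma aux_supermartingale_maximal {Ω : Type*} {m0 : MeasurableSpace Ω} {μ : Measure Ω}
    [IsFiniteMeasure μ] {𝒢 : Filtration ℕ m0} {Y : ℕ → Ω → ℝ}
    (hY : Supermartingale Y 𝒢 μ) (hpos : ∀ k ω, 0 ≤ Y k ω) {c : ℝ} (hc : 0 < c) (n : ℕ) :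
    c * (μ {ω | ∃ k ≤ n, c ≤ Y k ω}).toReal ≤ (∫ ω, Y 0 ω ∂μ) := by
  classical
  set τ : Ω → ℕ∞ := fun ω => (hittingBtwn Y (Set.Ici c) 0 n ω : ℕ) with hτdef
  have hτ : IsStoppingTime 𝒢 τ := hY.stronglyAdapted.adapted.isStoppingTime_hittingBtwn measurableSet_Ici
  have hτ_le : ∀ ω, τ ω ≤ n := fun ω => WithTop.coe_le_coe.mpr (hittingBtwn_le ω)
  have hint : Integrable (stoppedValue Y τ) μ :=
    integrable_stoppedValue ℕ hτ hY.integrable hτ_le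
  have hDmeas : MeasurableSet {ω | ∃ k ≤ n, c ≤ Y k ω} := by
    have : {ω | ∃ k ≤ n, c ≤ Y k ω} = ⋃ k, ⋃ _ : k ≤ n, {ω | c ≤ Y k ω} := by
      ext ω; simp
    rw [this]
    exact MeasurableSet.iUnion fun k => MeasurableSet.iUnion fun _ =>
      measurableSet_le measurable_const (((hY.stronglyAdapted k).mono (𝒢.le k)).measurable)
  have hstop : (∫ ω, stoppedValue Y τ ω ∂μ) ≤ (∫ ω, Y 0 ω ∂μ) := by
    have h := (hY.neg).expected_stoppedValue_mono (τ := fun _ => 0) (π := τ)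
      (isStoppingTime_const _ 0) hτ (fun ω => zero_le) hτ_le
    have e1 : stoppedValue (-Y) (fun _ => (0 : ℕ∞)) = fun ω => -(Y 0 ω) := by
      ext ω; simp [stoppedValue]; rfl
    have e2 : stoppedValue (-Y) τ = fun ω => -(stoppedValue Y τ ω) := by
      ext ω; simp [stoppedValue]
    rw [e1, e2, integral_neg, integral_neg, neg_le_neg_iff] at h
    exact h
  calc c * (μ {ω | ∃ k ≤ n, c ≤ Y k ω}).toReal
      ≤ ∫ ω in {ω | ∃ k ≤ n, c ≤ Y k ω}, stoppedValue Y τ ω ∂μ := by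
        rw [mul_comm, ← measureReal_def, ← smul_eq_mul]
        refine setIntegral_ge_of_const_le hDmeas (measure_ne_top _ _) ?_ hint.integrableOn
        intro ω hω
        obtain ⟨k, hk, hck⟩ := hω
        exact stoppedValue_hittingBtwn_mem ⟨k, ⟨Nat.zero_le _, hk⟩, hck⟩
    _ ≤ ∫ ω, stoppedValue Y τ ω ∂μ := setIntegral_le_integral hint
        (Filter.Eventually.of_forall fun ω => hpos _ _)
    _ ≤ ∫ ω, Y 0 ω ∂μ := hstop

/-- Maximal bound over dyadic times `s + i / 2^m`. -/
lemma aux_dyadic_bound {Ω : Type*} {m0 : MeasurableSpace Ω} {P : Measure Ω}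
    [IsProbabilityMeasure P] (ℱ : Filtration ℝ m0) (Z : ℝ → Ω → ℝ)
    (hZ : Supermartingale Z ℱ P) (hpos : ∀ t ω, 0 ≤ Z t ω)
    {c : ℝ} (hc : 0 < c) {s : ℝ} (hs : 0 ≤ s) :
    P {ω | ∃ m i : ℕ, c ≤ Z (s + (i : ℝ) / 2 ^ m) ω} ≤
      ENNReal.ofReal ((∫ ω, Z 0 ω ∂P) / c) := by
  classical
  have h24 : ∀ k : ℕ, (4 : ℕ) ^ k = 2 ^ (2 * k) := fun k => by rw [pow_mul]; norm_num
  set D : ℕ → Set Ω :=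
    fun m => {ω | ∃ i : ℕ, i ≤ 4 ^ m ∧ c ≤ Z (s + (i : ℝ) / 2 ^ m) ω} with hD
  have hDm_bound : ∀ m, P (D m) ≤ ENNReal.ofReal ((∫ ω, Z 0 ω ∂P) / c) := by
    intro m
    set t : ℕ → ℝ := fun i => s + (i : ℝ) / 2 ^ m with ht
    have htmono : Monotone t := by
      intro i j hij
      have : (i : ℝ) ≤ j := Nat.cast_le.mpr hij
      dsimp [t]
      gcongr
    set 𝒢 : Filtration ℕ m0 :=
      { seq := fun k => ℱ (t k)
        mono' := fun i j hij => ℱ.mono (htmono hij)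
        le' := fun k => ℱ.le (t k) } with h𝒢
    have hY : Supermartingale (fun i => Z (t i)) 𝒢 P :=
      ⟨fun i => hZ.stronglyAdapted (t i), fun i j hij => hZ.2.1 (t i) (t j) (htmono hij),
        fun i => hZ.2.2 (t i)⟩
    have h1 := aux_supermartingale_maximal hY (fun k ω => hpos _ _) hc (4 ^ m)
    have h2 : (∫ ω, Z (t 0) ω ∂P) ≤ ∫ ω, Z 0 ω ∂P := by
      have ht0 : (0 : ℝ) ≤ t 0 := by simp [t, hs]
      have := hZ.setIntegral_le ht0 (MeasurableSet.univ)
      simpa [setIntegral_univ] using this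
    have h3 : c * (P (D m)).toReal ≤ ∫ ω, Z 0 ω ∂P := le_trans h1 h2
    rw [ENNReal.le_ofReal_iff_toReal_le (measure_ne_top _ _)
      (div_nonneg (integral_nonneg fun ω => hpos 0 ω) hc.le)]
    rw [le_div_iff₀ hc]
    linarith [h3]
  have hmono : Monotone D := by
    intro m m' hmm' ω hω
    obtain ⟨i, hi, hci⟩ := hω
    refine ⟨i * 2 ^ (m' - m), ?_, ?_⟩
    · calc i * 2 ^ (m' - m) ≤ 4 ^ m * 2 ^ (m' - m) := Nat.mul_le_mul_right _ hi
        _ = 2 ^ (2 * m + (m' - m)) := by rw [h24, pow_add]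
        _ ≤ 2 ^ (2 * m') := Nat.pow_le_pow_right (by norm_num) (by omega)
        _ = 4 ^ m' := (h24 m').symm
    · have heq : ((i * 2 ^ (m' - m) : ℕ) : ℝ) / 2 ^ m' = (i : ℝ) / 2 ^ m := by
        push_cast
        rw [div_eq_div_iff (by positivity) (by positivity), mul_assoc, ← pow_add]
        have : m' - m + m = m' := by omega
        rw [this]
      rwa [heq]
  calc P {ω | ∃ m i : ℕ, c ≤ Z (s + (i : ℝ) / 2 ^ m) ω} ≤ P (⋃ m, D m) := by
        refine measure_mono ?_
        rintro ω ⟨m, i, hci⟩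
        refine Set.mem_iUnion.mpr ⟨m + i, ⟨i * 2 ^ i, ?_, ?_⟩⟩
        · calc i * 2 ^ i ≤ 2 ^ i * 2 ^ i := Nat.mul_le_mul_right _ (Nat.lt_two_pow_self (n := i)).le
            _ = 2 ^ (2 * i) := by rw [← pow_add]; ring_nf
            _ ≤ 2 ^ (2 * (m + i)) := Nat.pow_le_pow_right (by norm_num) (by omega)
            _ = 4 ^ (m + i) := (h24 (m + i)).symm
        · have heq : ((i * 2 ^ i : ℕ) : ℝ) / 2 ^ (m + i) = (i : ℝ) / 2 ^ m := by
            push_cast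
            rw [div_eq_div_iff (by positivity) (by positivity), mul_assoc, ← pow_add,
              add_comm i m]
          rwa [heq]
    _ = ⨆ m, P (D m) := hmono.measure_iUnion
    _ ≤ ENNReal.ofReal ((∫ ω, Z 0 ω ∂P) / c) := iSup_le hDm_bound

lemma aux_dyadic_dense {n : ℕ} {t δ : ℝ} (hnt : (n : ℝ) ≤ t) (hδ : 0 < δ) :
    ∃ m i : ℕ, t ≤ (n : ℝ) + (i : ℝ) / 2 ^ m ∧ (n : ℝ) + (i : ℝ) / 2 ^ m < t + δ := by
  obtain ⟨m, hm⟩ := exists_pow_lt_of_lt_one hδ (by norm_num : (1 : ℝ) / 2 < 1)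
  have hm' : (1 : ℝ) / 2 ^ m < δ := by rwa [← one_div_pow]
  refine ⟨m, ⌈(t - n) * 2 ^ m⌉₊, ?_, ?_⟩
  · have hle : (t - n) * 2 ^ m ≤ (⌈(t - n) * 2 ^ m⌉₊ : ℝ) := Nat.le_ceil _
    have h2m : (0 : ℝ) < 2 ^ m := by positivity
    rw [← sub_le_iff_le_add', le_div_iff₀ h2m]
    linarith
  · have hlt : (⌈(t - n) * 2 ^ m⌉₊ : ℝ) < (t - n) * 2 ^ m + 1 :=
      Nat.ceil_lt_add_one (mul_nonneg (by linarith) (by positivity))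
    have h2m : (0 : ℝ) < 2 ^ m := by positivity
    have : (⌈(t - n) * 2 ^ m⌉₊ : ℝ) / 2 ^ m < t - n + 1 / 2 ^ m := by
      rw [div_lt_iff₀ h2m]
      have : (t - n + 1 / 2 ^ m) * 2 ^ m = (t - n) * 2 ^ m + 1 := by field_simp
      linarith [this]
    linarith

/-- A nonnegative right-continuous supermartingale `Z` with `Z_0 = 1` satisfies
`limsup_{t→∞} (1/t) ln Z_t ≤ 0` almost surely. -/
theorem supermartingale_limsup_log_le_zero {Ω : Type*} {m0 : MeasurableSpace Ω}
    {P : Measure Ω} [IsProbabilityMeasure P]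
    (ℱ : Filtration ℝ m0) (Z : ℝ → Ω → ℝ)
    (hZ : Supermartingale Z ℱ P)
    (hpos : ∀ t ω, 0 ≤ Z t ω)
    (h0 : ∀ᵐ ω ∂P, Z 0 ω = 1)
    (hrc : ∀ ω t, ContinuousWithinAt (fun s => Z s ω) (Set.Ici t) t) :
    ∀ᵐ ω ∂P, limsup (fun t : ℝ => (1 / t) * Real.log (Z t ω)) atTop ≤ 0 := by
  have hZ0 : (∫ ω, Z 0 ω ∂P) = 1 := by
    rw [integral_congr_ae h0]
    simp
  -- the key eventual bound for each `j`
  have key : ∀ j : ℕ, ∀ᵐ ω ∂P, ∀ᶠ t in atTop,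
      (1 / t) * Real.log (Z t ω) ≤ 1 / ((j : ℝ) + 1) := by
    intro j
    set ε : ℝ := 1 / ((j : ℝ) + 1) with hε
    have hεpos : 0 < ε := by positivity
    set B : ℕ → Set Ω :=
      fun n => {ω | ∃ m i : ℕ, Real.exp (ε * n) ≤ Z ((n : ℝ) + (i : ℝ) / 2 ^ m) ω} with hBdef
    have hB : ∀ n, P (B n) ≤ ENNReal.ofReal (Real.exp (-ε) ^ n) := by
      intro n
      have h := aux_dyadic_bound ℱ Z hZ hpos (Real.exp_pos (ε * n)) (Nat.cast_nonneg n)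
      refine h.trans (le_of_eq ?_)
      congr 1
      rw [hZ0, ← Real.exp_nat_mul, one_div, ← Real.exp_neg]
      ring_nf
    have hsum : (∑' n, P (B n)) ≠ ⊤ := by
      refine ne_top_of_le_ne_top ?_ (ENNReal.tsum_le_tsum hB)
      have hlt1 : ENNReal.ofReal (Real.exp (-ε)) < 1 := by
        rw [← ENNReal.ofReal_one]
        exact ENNReal.ofReal_lt_ofReal_iff_of_nonneg (Real.exp_pos _).le |>.mpr
          (Real.exp_lt_one_iff.mpr (by linarith))
      have : ∀ n : ℕ, ENNReal.ofReal (Real.exp (-ε) ^ n) =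
          (ENNReal.ofReal (Real.exp (-ε))) ^ n := fun n =>
        ENNReal.ofReal_pow (Real.exp_pos _).le n
      simp_rw [this, ENNReal.tsum_geometric]
      rw [Ne, ENNReal.inv_eq_top, tsub_eq_zero_iff_le]
      exact fun h => absurd h (not_le.mpr hlt1)
    have hlimsup : P (limsup B atTop) = 0 := measure_limsup_atTop_eq_zero hsum
    have hae : ∀ᵐ ω ∂P, ω ∉ limsup B atTop := measure_eq_zero_iff_ae_notMem.mp hlimsup
    filter_upwards [hae] with ω hω
    rw [mem_limsup_iff_frequently_mem, Filter.not_frequently] at hω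
    obtain ⟨N, hN⟩ := eventually_atTop.mp hω
    rw [eventually_atTop]
    refine ⟨max ((N : ℝ) + 1) 1, fun t ht => ?_⟩
    have ht1 : (1 : ℝ) ≤ t := le_trans (le_max_right _ _) ht
    have htN : (N : ℝ) + 1 ≤ t := le_trans (le_max_left _ _) ht
    have ht0 : (0 : ℝ) < t := by linarith
    set n : ℕ := ⌊t⌋₊ with hn
    have hnN : N ≤ n := Nat.le_floor (by linarith)
    have hnt : (n : ℝ) ≤ t := Nat.floor_le ht0.le
    -- `Z t ω ≤ exp (ε n)`
    have hZt : Z t ω ≤ Real.exp (ε * n) := by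
      by_contra hcon
      push_neg at hcon
      have h1 : {s : ℝ | Real.exp (ε * n) < Z s ω} ∈ nhdsWithin t (Set.Ici t) :=
        hrc ω t (Ioi_mem_nhds hcon)
      rw [Metric.mem_nhdsWithin_iff] at h1
      obtain ⟨δ, hδ, hsub⟩ := h1
      obtain ⟨m, i, hq1, hq2⟩ := aux_dyadic_dense hnt hδ
      have hqmem : ((n : ℝ) + (i : ℝ) / 2 ^ m) ∈ Metric.ball t δ ∩ Set.Ici t := by
        constructor
        · rw [Metric.mem_ball, Real.dist_eq, abs_lt]
          constructor <;> linarith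
        · exact hq1
      have := hsub hqmem
      exact hN n hnN ⟨m, i, this.le⟩
    -- conclude
    have hlog : Real.log (Z t ω) ≤ ε * t := by
      rcases eq_or_lt_of_le (hpos t ω) with hz | hz
      · rw [← hz, Real.log_zero]
        positivity
      · refine (Real.log_le_iff_le_exp hz).mpr (hZt.trans ?_)
        exact Real.exp_le_exp.mpr (mul_le_mul_of_nonneg_left hnt hεpos.le)
    calc (1 / t) * Real.log (Z t ω) ≤ (1 / t) * (ε * t) := by
          exact mul_le_mul_of_nonneg_left hlog (by positivity)
      _ = ε := by field_simp
  -- combine over all `j`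
  rw [← ae_all_iff] at key
  filter_upwards [key] with ω hω
  rw [limsup_eq]
  by_cases hbdd : BddBelow {a : ℝ | ∀ᶠ t in atTop, (1 / t) * Real.log (Z t ω) ≤ a}
  · by_contra hcon
    push_neg at hcon
    obtain ⟨j, hj⟩ := exists_nat_one_div_lt hcon
    exact absurd (csInf_le hbdd (hω j)) (not_le.mpr hj)
  · rw [Real.sInf_of_not_bddBelow hbdd]
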